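/- Let V be a vector space of dimension d ≥ 2 over an infinite field k, and let V₁,…,Vₙ be finitely many proper subspaces of V with dim_k V_i ≤ dim_k V − 2 for each i. Then there exist a, b ∈ V such that the two-dimensional subspace H = ka ⊕ kb satisfies H ∩ V_i = 0 for i = 1,…,n. -/
import Mathlib

universe u v

lemma aux_exists_not_mem {k : Type u} {V : Type v} [Field k] [Infinite k]
    [AddCommGroup V] [Module k V] {ι : Type} [Finite ι] (p : ι → Submodule k V)
    (h : ∀ i, p i ≠ ⊤) : ∃ x : V, ∀ i, x ∉ p i := by
  by_contra hc
  push_neg at hc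
  have hcov : ⋃ i, ((p i : Submodule k V) : Set V) = Set.univ := by
    ext x
    simp only [Set.mem_iUnion, Set.mem_univ, iff_true]
    obtain ⟨i, hi⟩ := hc x
    exact ⟨i, hi⟩
  obtain ⟨i, hi⟩ := Subspace.exists_eq_top_of_iUnion_eq_univ hcov
  exact h i hi

theorem statement10 {k : Type u} {V : Type v} [Field k] [Infinite k]
    [AddCommGroup V] [Module k V] [FiniteDimensional k V]
    (d : ℕ) (hd : 2 ≤ d) (hdim : Module.finrank k V = d)
    (n : ℕ) (Vs : Fin n → Submodule k V)
    (hproper : ∀ i, Vs i ≠ ⊤)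
    (hdims : ∀ i, Module.finrank k ↥(Vs i) ≤ Module.finrank k V - 2) :
    ∃ a b : V, LinearIndependent k ![a, b] ∧
      ∀ i, Submodule.span k {a, b} ⊓ Vs i = ⊥ := by
  have hpos : 0 < Module.finrank k V := by omega
  have : Nontrivial V := Module.nontrivial_of_finrank_pos hpos
  -- choose a ∉ all Vs i, a ≠ 0
  obtain ⟨a, ha⟩ := aux_exists_not_mem (ι := Option (Fin n))
    (fun o => o.elim ⊥ Vs)
    (by rintro (_ | i)
        · exact bot_ne_top
        · exact hproper i)
  have ha0 : a ≠ 0 := fun h => ha none (by simp [h])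
  have haVs : ∀ i, a ∉ Vs i := fun i => ha (some i)
  -- the enlarged subspaces
  have hspan_rank : Module.finrank k (Submodule.span k {a}) = 1 :=
    finrank_span_singleton ha0
  have hWproper : ∀ i, Vs i ⊔ Submodule.span k {a} ≠ ⊤ := by
    intro i htop
    have h1 : Module.finrank k ↥(Vs i ⊔ Submodule.span k {a}) ≤
        Module.finrank k ↥(Vs i) + Module.finrank k ↥(Submodule.span k {a}) :=
      Submodule.finrank_add_le_finrank_add_finrank _ _
    rw [htop, finrank_top, hspan_rank, hdim] at h1
    have := hdims i
    rw [hdim] at this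
    omega
  have hsproper : (Submodule.span k {a} : Submodule k V) ≠ ⊤ := by
    intro htop
    have := hspan_rank
    rw [htop, finrank_top, hdim] at this
    omega
  obtain ⟨b, hb⟩ := aux_exists_not_mem (ι := Option (Fin n))
    (fun o => o.elim (Submodule.span k {a}) (fun i => Vs i ⊔ Submodule.span k {a}))
    (by rintro (_ | i)
        · exact hsproper
        · exact hWproper i)
  have hbspan : b ∉ Submodule.span k {a} := hb none
  have hbW : ∀ i, b ∉ Vs i ⊔ Submodule.span k {a} := fun i => hb (some i)
  refine ⟨a, b, ?_, ?_⟩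
  · rw [linearIndependent_fin2]
    simp only [Matrix.cons_val_one, Matrix.head_cons, Matrix.cons_val_zero]
    constructor
    · intro h; exact hbspan (h ▸ Submodule.zero_mem _)
    · intro c hc
      rcases eq_or_ne c 0 with rfl | hc0
      · simp at hc; exact ha0 hc.symm
      · apply hbspan
        have : b = c⁻¹ • a := by
          rw [← hc, smul_smul, inv_mul_cancel₀ hc0, one_smul]
        rw [this]
        exact Submodule.smul_mem _ _ (Submodule.mem_span_singleton_self a)
  · intro i
    rw [eq_bot_iff]
    rintro x ⟨hx1, hx2⟩
    obtain ⟨α, β, rfl⟩ := Submodule.mem_span_pair.mp hx1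
    rcases eq_or_ne β 0 with rfl | hβ
    · rcases eq_or_ne α 0 with rfl | hα
      · simp
      · exfalso
        apply haVs i
        have : a = α⁻¹ • (α • a + (0:k) • b) := by
          simp [smul_smul, inv_mul_cancel₀ hα]
        rw [this]
        exact Submodule.smul_mem _ _ hx2
    · exfalso
      apply hbW i
      have hmem : α • a + β • b ∈ Vs i ⊔ Submodule.span k {a} :=
        Submodule.mem_sup_left hx2
      have hamem : a ∈ Vs i ⊔ Submodule.span k {a} :=
        Submodule.mem_sup_right (Submodule.mem_span_singleton_self a)
      have : b = β⁻¹ • ((α • a + β • b) - α • a) := by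
        simp [smul_smul, inv_mul_cancel₀ hβ]
      rw [this]
      exact Submodule.smul_mem _ _ (Submodule.sub_mem _ hmem (Submodule.smul_mem _ _ hamem))
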